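/- Let γ > 0 and, for each k ∈ ℕ, let W^k ∈ ℝ^{N×N} be a symmetric doubly stochastic matrix whose diagonal entries are strictly positive, whose nonzero entries are all at least γ, and whose associated graph (with an edge {i,j} whenever w_{ij}^k > 0) is connected. Let m̂ = (m̂_1,…,m̂_N) ∈ (ℝ^N)^N be fixed, set φ = (1/N) Σ_{i=1}^N m̂_i and Φ = (φ,…,φ) ∈ (ℝ^N)^N. Let (α_k)_{k∈ℕ} ⊂ (0,1) satisfy α_k → 0, Σ_{k∈ℕ} α_k = +∞, and Σ_{k∈ℕ} |α_{k+1} − α_k| < +∞. Then for any x^0 ∈ (ℝ^N)^N, the iterates x^{k+1} = (1−α_k)(W^k ⊗ I_N)x^k + α_k m̂ converge to Φ. -/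

import Mathlib

open Finset Filter

/-- The stacked space `(ℝ^N)^N` with the Euclidean norm `‖x‖² = Σ_i ‖x_i‖²`. -/
abbrev Blk (N : ℕ) := PiLp 2 (fun _ : Fin N => EuclideanSpace ℝ (Fin N))

/-- The operator `W ⊗ I_N` acting blockwise on `(ℝ^N)^N`:
`((W ⊗ I_N)x)_i = Σ_j w_{ij} x_j`. -/
noncomputable def blockOp {N : ℕ} (W : Matrix (Fin N) (Fin N) ℝ) (x : Blk N) : Blk N :=
  (WithLp.equiv 2 ((_ : Fin N) → EuclideanSpace ℝ (Fin N))).symm fun i => ∑ j, W i j • x j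


lemma sum_factor {N : ℕ} (w a : Fin N → ℝ) :
    ∑ j, ∑ l, w j * w l * (a j - a l) ^ 2
      = (∑ j, w j * a j ^ 2) * (∑ l, w l) - 2 * ((∑ j, w j * a j) * (∑ l, w l * a l))
        + (∑ j, w j) * (∑ l, w l * a l ^ 2) := by
  rw [Finset.sum_mul_sum, Finset.sum_mul_sum, Finset.sum_mul_sum, Finset.mul_sum,
    ← Finset.sum_sub_distrib, ← Finset.sum_add_distrib]
  refine Finset.sum_congr rfl fun j _ => ?_
  rw [Finset.mul_sum, ← Finset.sum_sub_distrib, ← Finset.sum_add_distrib]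
  exact Finset.sum_congr rfl fun l _ => by ring

lemma var_identity {N : ℕ} (w a : Fin N → ℝ) (hw1 : ∑ j, w j = 1) :
    ∑ j, w j * a j ^ 2 - (∑ j, w j * a j) ^ 2
      = (1/2) * ∑ j, ∑ l, w j * w l * (a j - a l) ^ 2 := by
  rw [sum_factor, hw1]; ring

-- extract the (·,i) and (i,·) terms from a nonneg double sum with F i i = 0
lemma double_sum_extract {N : ℕ} (F : Fin N → Fin N → ℝ) (hF : ∀ j l, 0 ≤ F j l)
    (i : Fin N) (hii : F i i = 0) :
    (∑ l, F i l) + (∑ j, F j i) ≤ ∑ j, ∑ l, F j l := by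
  have h1 : ∀ j : Fin N, (if j = i then ∑ l, F i l else F j i) ≤ ∑ l, F j l := by
    intro j
    split
    · next h => subst h; exact le_refl _
    · exact Finset.single_le_sum (fun l _ => hF j l) (mem_univ i)
  calc (∑ l, F i l) + (∑ j, F j i)
      = ∑ j, (if j = i then ∑ l, F i l else F j i) := by
        have : ∀ j : Fin N, (if j = i then ∑ l, F i l else F j i)
            = F j i + (if j = i then ∑ l, F i l else 0) := by
          intro j; split
          · next h => subst h; rw [hii]; ring
          · ring
        rw [Finset.sum_congr rfl fun j _ => this j, Finset.sum_add_distrib,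
          Finset.sum_ite_eq' univ i (fun _ => ∑ l, F i l), if_pos (mem_univ i)]
        ring
    _ ≤ ∑ j, ∑ l, F j l := Finset.sum_le_sum fun j _ => h1 j

lemma bracket_ge {N : ℕ} (γ : ℝ) (w v : Fin N → ℝ) (i : Fin N)
    (hw0 : ∀ j, 0 ≤ w j) (hw1 : ∑ j, w j = 1)
    (hdiag : γ ≤ w i) (hγ : ∀ j, w j ≠ 0 → γ ≤ w j) (hγ0 : 0 ≤ γ) :
    ∑ j, (if w j = 0 then 0 else γ ^ 2 * (v i - v j) ^ 2)
      ≤ ∑ j, w j * v j ^ 2 - (∑ j, w j * v j) ^ 2 := by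
  rw [var_identity w v hw1]
  set F : Fin N → Fin N → ℝ := fun j l => w j * w l * (v j - v l) ^ 2 with hFdef
  have hF : ∀ j l, 0 ≤ F j l := fun j l => by
    have := hw0 j; have := hw0 l; positivity
  have hii : F i i = 0 := by simp [hFdef]
  have key := double_sum_extract F hF i hii
  have h2 : ∀ j, (if w j = 0 then 0 else γ ^ 2 * (v i - v j) ^ 2) ≤ (1/2) * (F i j + F j i) := by
    intro j
    split
    · next h =>
      have : F i j + F j i = 0 := by simp [hFdef, h]
      rw [this]; norm_num
    · next h =>
      have hγj := hγ j h
      have : γ ^ 2 * (v i - v j) ^ 2 ≤ F i j := by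
        have h1 : γ * γ ≤ w i * w j := mul_le_mul hdiag hγj hγ0 (le_trans hγ0 hdiag)
        have h2 : (0:ℝ) ≤ (v i - v j)^2 := sq_nonneg _
        simp only [hFdef]
        nlinarith
      have heq : F i j = F j i := by simp only [hFdef]; ring
      linarith
  calc ∑ j, (if w j = 0 then 0 else γ ^ 2 * (v i - v j) ^ 2)
      ≤ ∑ j, (1/2) * (F i j + F j i) := Finset.sum_le_sum fun j _ => h2 j
    _ = (1/2) * ((∑ l, F i l) + (∑ j, F j i)) := by
        rw [mul_add, Finset.mul_sum, Finset.mul_sum, ← Finset.sum_add_distrib]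
        exact Finset.sum_congr rfl fun j _ => by ring
    _ ≤ (1/2) * ∑ j, ∑ l, F j l := by linarith

lemma gap_lemma {N : ℕ} (γ : ℝ) (hγ0 : 0 ≤ γ) (M : Matrix (Fin N) (Fin N) ℝ)
    (hnn : ∀ i j, 0 ≤ M i j) (hrow : ∀ i, ∑ j, M i j = 1) (hcol : ∀ j, ∑ i, M i j = 1)
    (hdiag : ∀ i, γ ≤ M i i) (hγbd : ∀ i j, M i j ≠ 0 → γ ≤ M i j) (v : Fin N → ℝ) :
    ∑ i, (∑ j, M i j * v j) ^ 2
      ≤ ∑ i, v i ^ 2 - γ ^ 2 * ∑ i, ∑ j, (if M i j = 0 then 0 else (v i - v j) ^ 2) := by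
  have hbr : ∀ i, ∑ j, (if M i j = 0 then 0 else γ ^ 2 * (v i - v j) ^ 2)
      ≤ ∑ j, M i j * v j ^ 2 - (∑ j, M i j * v j) ^ 2 := fun i =>
    bracket_ge γ (fun j => M i j) v i (hnn i) (hrow i) (hdiag i) (hγbd i) hγ0
  have htot : ∑ i, ∑ j, M i j * v j ^ 2 = ∑ i, v i ^ 2 := by
    rw [Finset.sum_comm]
    refine Finset.sum_congr rfl fun j _ => ?_
    rw [← Finset.sum_mul, hcol j, one_mul]
  have hpull : ∀ i, ∑ j, (if M i j = 0 then 0 else γ ^ 2 * (v i - v j) ^ 2)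
      = γ ^ 2 * ∑ j, (if M i j = 0 then 0 else (v i - v j) ^ 2) := by
    intro i
    rw [Finset.mul_sum]
    refine Finset.sum_congr rfl fun j _ => ?_
    split <;> simp
  have h1 : γ ^ 2 * ∑ i, ∑ j, (if M i j = 0 then 0 else (v i - v j) ^ 2)
      ≤ ∑ i, (∑ j, M i j * v j ^ 2 - (∑ j, M i j * v j) ^ 2) := by
    rw [Finset.mul_sum]
    exact Finset.sum_le_sum fun i _ => by rw [← hpull i]; exact hbr i
  rw [Finset.sum_sub_distrib, htot] at h1
  linarith

lemma poincare {N : ℕ} (M : Matrix (Fin N) (Fin N) ℝ) (hsymm : M.IsSymm)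
    (hconn : (SimpleGraph.fromRel fun i j => 0 < M i j).Connected)
    (v : Fin N → ℝ) (hv : ∑ i, v i = 0) :
    2 * (N : ℝ) * ∑ i, v i ^ 2
      ≤ (N : ℝ) ^ 2 * ((N : ℝ) - 1) ^ 2 * ∑ i, ∑ j, (if M i j = 0 then 0 else (v i - v j) ^ 2) := by
  set G := SimpleGraph.fromRel fun i j => 0 < M i j with hG
  set E := ∑ i, ∑ j, (if M i j = 0 then 0 else (v i - v j) ^ 2) with hE
  have hterm : ∀ (i j : Fin N), (0:ℝ) ≤ (if M i j = 0 then 0 else (v i - v j) ^ 2) := by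
    intro i j; split
    · exact le_refl _
    · exact sq_nonneg _
  have hE0 : 0 ≤ E := Finset.sum_nonneg fun i _ => Finset.sum_nonneg fun j _ => hterm i j
  have hN : 0 < N := by
    have := hconn.nonempty; exact Fin.pos this.some
  -- each edge difference is bounded by E
  have hedge : ∀ a b : Fin N, G.Adj a b → (v a - v b) ^ 2 ≤ E := by
    intro a b hab
    rw [hG, SimpleGraph.fromRel_adj] at hab
    have hpos : 0 < M a b := by
      rcases hab.2 with h | h
      · exact h
      · rwa [← hsymm.apply b a] at h
    have h1 : (v a - v b) ^ 2 ≤ ∑ j, (if M a j = 0 then 0 else (v a - v j) ^ 2) := by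
      have : (if M a b = 0 then 0 else (v a - v b) ^ 2) = (v a - v b) ^ 2 :=
        if_neg (ne_of_gt hpos)
      rw [← this]
      exact Finset.single_le_sum (fun j _ => hterm a j) (mem_univ b)
    exact le_trans h1 (Finset.single_le_sum
      (fun i _ => Finset.sum_nonneg fun j _ => hterm i j) (mem_univ a))
  -- telescoping along walks
  have hwalk : ∀ (a b : Fin N) (p : G.Walk a b), |v a - v b| ≤ p.length * Real.sqrt E := by
    intro a b p
    induction p with
    | nil => simp
    | cons h q ih =>
      rename_i c d e
      have h1 : |v c - v d| ≤ Real.sqrt E := by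
        rw [← Real.sqrt_sq_eq_abs]
        exact Real.sqrt_le_sqrt (hedge c d h)
      calc |v c - v e| = |(v c - v d) + (v d - v e)| := by ring_nf
        _ ≤ |v c - v d| + |v d - v e| := abs_add_le _ _
        _ ≤ Real.sqrt E + q.length * Real.sqrt E := add_le_add h1 ih
        _ = (SimpleGraph.Walk.cons h q).length * Real.sqrt E := by
            rw [SimpleGraph.Walk.length_cons]; push_cast; ring
  -- any pair difference
  have hpair : ∀ a b : Fin N, (v a - v b) ^ 2 ≤ ((N : ℝ) - 1) ^ 2 * E := by
    intro a b
    obtain ⟨p⟩ := hconn.preconnected a b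
    have hlen : (p.bypass.length : ℝ) ≤ (N : ℝ) - 1 := by
      have := p.bypass_isPath.length_lt
      rw [Fintype.card_fin] at this
      have : p.bypass.length ≤ N - 1 := by omega
      have h2 : ((N:ℕ) - 1 : ℕ) = ((N:ℝ) - 1 : ℝ) := by
        push_cast [Nat.cast_sub hN]; ring
      calc (p.bypass.length : ℝ) ≤ ((N - 1 : ℕ) : ℝ) := by exact_mod_cast this
        _ = (N : ℝ) - 1 := h2
    have h3 : |v a - v b| ≤ ((N : ℝ) - 1) * Real.sqrt E := by
      calc |v a - v b| ≤ p.bypass.length * Real.sqrt E := hwalk a b p.bypass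
        _ ≤ ((N : ℝ) - 1) * Real.sqrt E :=
            mul_le_mul_of_nonneg_right hlen (Real.sqrt_nonneg E)
    calc (v a - v b) ^ 2 = |v a - v b| ^ 2 := (sq_abs _).symm
      _ ≤ (((N : ℝ) - 1) * Real.sqrt E) ^ 2 := by
          apply sq_le_sq' _ h3
          have : 0 ≤ ((N : ℝ) - 1) * Real.sqrt E :=
            mul_nonneg (by simp; exact_mod_cast hN) (Real.sqrt_nonneg E)
          linarith [abs_nonneg (v a - v b)]
      _ = ((N : ℝ) - 1) ^ 2 * E := by
          rw [mul_pow, Real.sq_sqrt hE0]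
  -- sum of all pair differences
  have hsum : ∑ a, ∑ b, (v a - v b) ^ 2 = 2 * (N : ℝ) * ∑ i, v i ^ 2 := by
    have h1 : ∀ a : Fin N, ∑ b, (v a - v b) ^ 2
        = N * v a ^ 2 - 2 * v a * (∑ i, v i) + ∑ b, v b ^ 2 := by
      intro a
      have : ∀ b : Fin N, (v a - v b) ^ 2 = v a ^ 2 - 2 * v a * v b + v b ^ 2 :=
        fun b => by ring
      rw [Finset.sum_congr rfl fun b _ => this b, Finset.sum_add_distrib,
        Finset.sum_sub_distrib, Finset.sum_const, ← Finset.mul_sum, card_univ,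
        Fintype.card_fin, nsmul_eq_mul]
    rw [Finset.sum_congr rfl fun a _ => h1 a, Finset.sum_add_distrib,
      Finset.sum_sub_distrib, Finset.sum_const, card_univ, Fintype.card_fin, nsmul_eq_mul]
    have e1 : ∑ a, (N:ℝ) * v a ^ 2 = (N:ℝ) * ∑ a, v a ^ 2 := by rw [Finset.mul_sum]
    have e2 : ∑ a, 2 * v a * (∑ i, v i) = 0 := by simp [hv]
    rw [e1, e2]; ring
  have hbound : ∑ a, ∑ b, (v a - v b) ^ 2 ≤ (N:ℝ)^2 * ((N:ℝ)-1)^2 * E := by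
    calc ∑ a, ∑ b, (v a - v b) ^ 2 ≤ ∑ _a : Fin N, ∑ _b : Fin N, ((N:ℝ)-1)^2 * E :=
        Finset.sum_le_sum fun a _ => Finset.sum_le_sum fun b _ => hpair a b
      _ = (N:ℝ)^2 * ((N:ℝ)-1)^2 * E := by
          simp [Finset.sum_const, card_univ, Fintype.card_fin]; ring
  rw [← hsum]; exact hbound
lemma contraction_exists {N : ℕ} (γ : ℝ) (hγ : 0 < γ) (W : ℕ → Matrix (Fin N) (Fin N) ℝ)
    (hsymm : ∀ k, (W k).IsSymm) (hnonneg : ∀ k i j, 0 ≤ W k i j)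
    (hrow : ∀ k i, ∑ j, W k i j = 1) (hcol : ∀ k j, ∑ i, W k i j = 1)
    (hdiag : ∀ k i, 0 < W k i i) (hγbd : ∀ k i j, W k i j ≠ 0 → γ ≤ W k i j)
    (hconn : ∀ k, (SimpleGraph.fromRel fun i j => 0 < W k i j).Connected) :
    ∃ ρ : ℝ, 0 ≤ ρ ∧ ρ < 1 ∧ ∀ (k : ℕ) (v : Fin N → ℝ), (∑ i, v i = 0) →
      ∑ i, (∑ j, W k i j * v j) ^ 2 ≤ ρ ^ 2 * ∑ i, v i ^ 2 := by
  have hN : 0 < N := Fin.pos (hconn 0).nonempty.some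
  by_cases hN1 : N = 1
  · refine ⟨1/2, by norm_num, by norm_num, fun k v hv => ?_⟩
    subst hN1
    have hv0 : ∀ i, v i = 0 := by
      intro i
      have h0 : v 0 = 0 := by simpa using hv
      have : i = 0 := Subsingleton.elim i 0
      rw [this, h0]
    have h1 : ∀ i : Fin 1, (∑ j, W k i j * v j) ^ 2 = 0 := by
      intro i
      rw [Finset.sum_congr rfl fun j _ => by rw [hv0 j, mul_zero]]
      simp
    rw [Finset.sum_congr rfl fun i _ => h1 i]
    have h2 : ∑ i : Fin 1, v i ^ 2 = 0 := by
      rw [Finset.sum_congr rfl fun i _ => by rw [hv0 i]]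
      simp
    rw [h2]
    simp
  · have hN2 : 2 ≤ N := by omega
    have hN2R : (2:ℝ) ≤ (N:ℝ) := by exact_mod_cast hN2
    have hdiagγ : ∀ k i, γ ≤ W k i i := fun k i => hγbd k i i (ne_of_gt (hdiag k i))
    have hγ1 : γ ≤ 1 := by
      have i0 : Fin N := ⟨0, hN⟩
      calc γ ≤ W 0 i0 i0 := hdiagγ 0 i0
        _ ≤ ∑ j, W 0 i0 j := Finset.single_le_sum (fun j _ => hnonneg 0 i0 j) (mem_univ i0)
        _ = 1 := hrow 0 i0
    set c : ℝ := 2 / ((N:ℝ) * ((N:ℝ) - 1) ^ 2) with hc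
    have hden : 0 < (N:ℝ) * ((N:ℝ) - 1) ^ 2 := by nlinarith
    have hc0 : 0 < c := by positivity
    set δ : ℝ := γ ^ 2 * c with hδ
    have hδ0 : 0 < δ := by positivity
    have hδ1 : δ ≤ 1 := by
      have hc1 : c ≤ 1 := by
        rw [hc, div_le_one hden]; nlinarith
      nlinarith
    refine ⟨Real.sqrt (1 - δ), Real.sqrt_nonneg _, ?_, ?_⟩
    · have h1 : (1:ℝ) = Real.sqrt 1 := Real.sqrt_one.symm
      rw [h1]
      exact Real.sqrt_lt_sqrt (by linarith) (by linarith)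
    · intro k v hv
      have hgap := gap_lemma γ hγ.le (W k) (hnonneg k) (hrow k) (hcol k) (hdiagγ k) (hγbd k) v
      have hpoin := poincare (W k) (hsymm k) (hconn k) v hv
      set S := ∑ i, v i ^ 2 with hS
      set E := ∑ i, ∑ j, (if W k i j = 0 then 0 else (v i - v j) ^ 2) with hE
      have hS0 : 0 ≤ S := Finset.sum_nonneg fun i _ => sq_nonneg _
      have hE0 : 0 ≤ E := Finset.sum_nonneg fun i _ => Finset.sum_nonneg fun j _ => by
        split
        · exact le_refl _
        · exact sq_nonneg _
      have hNR : (0:ℝ) < (N:ℝ) := by linarith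
      have hcE : c * S ≤ E := by
        rw [hc, div_mul_eq_mul_div, div_le_iff₀ hden]
        nlinarith [hpoin, hNR, hE0, hS0]
      have hsq : Real.sqrt (1 - δ) ^ 2 = 1 - δ := Real.sq_sqrt (by linarith)
      rw [hsq]
      have hmul : γ ^ 2 * (c * S) ≤ γ ^ 2 * E := mul_le_mul_of_nonneg_left hcE (sq_nonneg γ)
      calc ∑ i, (∑ j, W k i j * v j) ^ 2 ≤ S - γ ^ 2 * E := hgap
        _ ≤ (1 - δ) * S := by rw [hδ]; nlinarith [hmul]
lemma euc_norm_sq {N : ℕ} (y : EuclideanSpace ℝ (Fin N)) : ‖y‖ ^ 2 = ∑ c, y c ^ 2 := by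
  rw [EuclideanSpace.norm_eq, Real.sq_sqrt (by positivity)]
  simp [Real.norm_eq_abs, sq_abs]

lemma block_contract {N : ℕ} (Wm : Matrix (Fin N) (Fin N) ℝ) (ρ : ℝ) (hρ : 0 ≤ ρ)
    (h : ∀ v : Fin N → ℝ, (∑ i, v i = 0) →
      ∑ i, (∑ j, Wm i j * v j) ^ 2 ≤ ρ ^ 2 * ∑ i, v i ^ 2)
    (x : Blk N) (hx : ∑ i, x i = (0 : EuclideanSpace ℝ (Fin N))) :
    ‖blockOp Wm x‖ ≤ ρ * ‖x‖ := by
  rw [PiLp.norm_eq_of_L2, PiLp.norm_eq_of_L2]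
  have hb : ∀ i c, (blockOp Wm x) i c = ∑ j, Wm i j * x j c := by
    intro i c
    simp only [blockOp, WithLp.equiv_symm_apply, PiLp.toLp_apply, WithLp.ofLp_sum]
    rw [Finset.sum_apply c Finset.univ]
    exact Finset.sum_congr rfl fun j _ => rfl
  have hkey : ∑ i, ‖(blockOp Wm x) i‖ ^ 2 ≤ ρ ^ 2 * ∑ i, ‖x i‖ ^ 2 := by
    have e1 : ∑ i, ‖(blockOp Wm x) i‖ ^ 2 = ∑ c, ∑ i, (∑ j, Wm i j * x j c) ^ 2 := by
      rw [Finset.sum_congr rfl fun i _ => euc_norm_sq ((blockOp Wm x) i)]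
      rw [Finset.sum_comm]
      exact Finset.sum_congr rfl fun c _ => Finset.sum_congr rfl fun i _ => by rw [hb]
    have e2 : ∑ i, ‖x i‖ ^ 2 = ∑ c, ∑ j, x j c ^ 2 := by
      rw [Finset.sum_congr rfl fun i _ => euc_norm_sq (x i)]
      rw [Finset.sum_comm]
    rw [e1, e2, Finset.mul_sum]
    refine Finset.sum_le_sum fun c _ => ?_
    refine h (fun j => x j c) ?_
    have h0 := congrArg (fun y : EuclideanSpace ℝ (Fin N) => y c) hx
    simp only [WithLp.ofLp_sum] at h0
    rw [Finset.sum_apply c Finset.univ] at h0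
    simpa using h0
  calc Real.sqrt (∑ i, ‖(blockOp Wm x) i‖ ^ 2)
      ≤ Real.sqrt (ρ ^ 2 * ∑ i, ‖x i‖ ^ 2) := Real.sqrt_le_sqrt hkey
    _ = ρ * Real.sqrt (∑ i, ‖x i‖ ^ 2) := by
        rw [Real.sqrt_mul (sq_nonneg ρ), Real.sqrt_sq hρ]

lemma tendsto_zero_of_recur {b ε : ℕ → ℝ} {ρ : ℝ} (hρ0 : 0 ≤ ρ) (hρ1 : ρ < 1)
    (hb : ∀ k, 0 ≤ b k) (hrec : ∀ k, b (k + 1) ≤ ρ * b k + ε k)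
    (hε0 : Tendsto ε atTop (nhds 0)) :
    Tendsto b atTop (nhds 0) := by
  rw [Metric.tendsto_atTop]
  intro e he
  have h2 : 0 < (1 - ρ) * (e / 2) := by
    have : 0 < 1 - ρ := by linarith
    positivity
  obtain ⟨n₁, hn₁⟩ := Metric.tendsto_atTop.mp hε0 ((1 - ρ) * (e / 2)) h2
  have key : ∀ m, b (n₁ + m) ≤ ρ ^ m * b n₁ + e / 2 := by
    intro m
    induction m with
    | zero => simpa using by linarith [hb n₁, he]
    | succ m ih =>
      have hε' : ε (n₁ + m) < (1 - ρ) * (e / 2) := by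
        have := hn₁ (n₁ + m) (Nat.le_add_right _ _)
        rw [Real.dist_eq, sub_zero] at this
        exact lt_of_le_of_lt (le_abs_self _) this
      have e1 : n₁ + (m + 1) = (n₁ + m) + 1 := by omega
      calc b (n₁ + (m + 1)) = b ((n₁ + m) + 1) := by rw [e1]
        _ ≤ ρ * b (n₁ + m) + ε (n₁ + m) := hrec _
        _ ≤ ρ * (ρ ^ m * b n₁ + e / 2) + (1 - ρ) * (e / 2) :=
            add_le_add (mul_le_mul_of_nonneg_left ih hρ0) (le_of_lt hε')
        _ ≤ ρ ^ (m + 1) * b n₁ + e / 2 := by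
            rw [pow_succ]
            nlinarith
  obtain ⟨m₀, hm₀⟩ := Metric.tendsto_atTop.mp
    ((tendsto_pow_atTop_nhds_zero_of_lt_one hρ0 hρ1).mul_const (b n₁)) (e / 2) (by linarith)
  refine ⟨n₁ + m₀, fun k hk => ?_⟩
  have h3 : ρ ^ (k - n₁) * b n₁ < e / 2 := by
    have := hm₀ (k - n₁) (by omega)
    rw [zero_mul, Real.dist_eq, sub_zero] at this
    exact lt_of_le_of_lt (le_abs_self _) this
  have h4 := key (k - n₁)
  have e2 : n₁ + (k - n₁) = k := by omega
  rw [e2] at h4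
  rw [Real.dist_eq, sub_zero, abs_of_nonneg (hb k)]
  linarith

lemma prod_tendsto_zero (α : ℕ → ℝ) (hα : ∀ k, 0 < α k ∧ α k < 1)
    (hαdiv : Tendsto (fun n => ∑ k ∈ Finset.range n, α k) atTop atTop) :
    Tendsto (fun n => ∏ k ∈ Finset.range n, (1 - α k)) atTop (nhds 0) := by
  have hnn : ∀ n, 0 ≤ ∏ k ∈ Finset.range n, (1 - α k) := fun n =>
    Finset.prod_nonneg fun k _ => by linarith [(hα k).2]
  have hle : ∀ n, ∏ k ∈ Finset.range n, (1 - α k)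
      ≤ Real.exp (-(∑ k ∈ Finset.range n, α k)) := by
    intro n
    calc ∏ k ∈ Finset.range n, (1 - α k)
        ≤ ∏ k ∈ Finset.range n, Real.exp (-(α k)) := by
          refine Finset.prod_le_prod (fun k _ => by linarith [(hα k).2]) fun k _ => ?_
          have := Real.add_one_le_exp (-(α k))
          linarith
      _ = Real.exp (-(∑ k ∈ Finset.range n, α k)) := by
          rw [← Real.exp_sum, Finset.sum_neg_distrib]
  refine squeeze_zero hnn hle ?_
  exact Real.tendsto_exp_atBot.comp (tendsto_neg_atTop_atBot.comp hαdiv)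

/-- with connected communication graphs, weights bounded below by `γ`, and
diminishing step sizes `α_k → 0`, `Σ α_k = ∞`, `Σ |α_{k+1} − α_k| < ∞`, the iterates
`x^{k+1} = (1−α_k)(W^k ⊗ I_N)x^k + α_k m̂` converge to the stacked Shapley value `Φ`. -/
theorem stmt_13 (N : ℕ) (γ : ℝ) (hγ : 0 < γ)
    (W : ℕ → Matrix (Fin N) (Fin N) ℝ)
    (hsymm : ∀ k, (W k).IsSymm)
    (hnonneg : ∀ k i j, 0 ≤ W k i j)
    (hrow : ∀ k i, ∑ j, W k i j = 1)
    (hcol : ∀ k j, ∑ i, W k i j = 1)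
    (hdiag : ∀ k i, 0 < W k i i)
    (hγbd : ∀ k i j, W k i j ≠ 0 → γ ≤ W k i j)
    (hconn : ∀ k, (SimpleGraph.fromRel fun i j => 0 < W k i j).Connected)
    (mh : Blk N)
    (φ : EuclideanSpace ℝ (Fin N)) (hφ : φ = (1 / (N : ℝ)) • ∑ i, mh i)
    (Φ : Blk N)
    (hΦ : Φ = (WithLp.equiv 2 ((_ : Fin N) → EuclideanSpace ℝ (Fin N))).symm fun _ => φ)
    (α : ℕ → ℝ) (hα : ∀ k, 0 < α k ∧ α k < 1)
    (hα0 : Filter.Tendsto α Filter.atTop (nhds 0))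
    (hαdiv : Filter.Tendsto (fun n => ∑ k ∈ Finset.range n, α k) Filter.atTop Filter.atTop)
    (hαvar : Summable fun k => |α (k + 1) - α k|)
    (x : ℕ → Blk N)
    (hx : ∀ k, x (k + 1) = (1 - α k) • blockOp (W k) (x k) + α k • mh) :
    Filter.Tendsto x Filter.atTop (nhds Φ) := by
  have hN : 0 < N := Fin.pos (hconn 0).nonempty.some
  have hNR : (0:ℝ) < (N:ℝ) := by exact_mod_cast hN
  obtain ⟨ρ, hρ0, hρ1, hρ⟩ :=
    contraction_exists γ hγ W hsymm hnonneg hrow hcol hdiag hγbd hconn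
  have blk_ext : ∀ (u v : Blk N), (∀ i, u i = v i) → u = v := by
    intro u v h; ext i c; rw [h i]
  set a : ℕ → EuclideanSpace ℝ (Fin N) := fun k => (N:ℝ)⁻¹ • ∑ i, x k i with ha
  set A : ℕ → Blk N := fun k =>
    (WithLp.equiv 2 ((_ : Fin N) → EuclideanSpace ℝ (Fin N))).symm fun _ => a k with hA
  set d : ℕ → Blk N := fun k => x k - A k with hd
  have hAi : ∀ k i, A k i = a k := fun k i => rfl
  have hΦi : ∀ i : Fin N, Φ i = φ := by intro i; rw [hΦ]; exact rfl
  have hBi : ∀ (M : Matrix (Fin N) (Fin N) ℝ) (y : Blk N) (i : Fin N),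
      blockOp M y i = ∑ j, M i j • y j := fun M y i => rfl
  have hdi : ∀ k i, d k i = x k i - a k := fun k i => rfl
  have hsumB : ∀ (kk : ℕ) (y : Blk N), ∑ i, blockOp (W kk) y i = ∑ j, y j := by
    intro kk y
    rw [Finset.sum_congr rfl fun i _ => hBi (W kk) y i, Finset.sum_comm]
    refine Finset.sum_congr rfl fun j _ => ?_
    rw [← Finset.sum_smul, hcol kk j, one_smul]
  have haRec : ∀ k, a (k + 1) = (1 - α k) • a k + α k • φ := by
    intro k
    have e1 : ∑ i, x (k + 1) i = (1 - α k) • (∑ j, x k j) + α k • ∑ i, mh i := by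
      rw [hx k]
      rw [show ∑ i, ((1 - α k) • blockOp (W k) (x k) + α k • mh) i
          = ∑ i, ((1 - α k) • blockOp (W k) (x k) i + α k • mh i) from rfl]
      rw [Finset.sum_add_distrib, ← Finset.smul_sum, ← Finset.smul_sum, hsumB k (x k)]
    simp only [ha]
    rw [e1, hφ, one_div]
    module
  have hARec : ∀ k, A (k + 1) = (1 - α k) • A k + α k • Φ := by
    intro k
    refine blk_ext _ _ fun i => ?_
    calc A (k + 1) i = a (k + 1) := rfl
      _ = (1 - α k) • a k + α k • φ := haRec k
      _ = (1 - α k) • A k i + α k • Φ i := by rw [hAi, hΦi]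
      _ = ((1 - α k) • A k + α k • Φ) i := rfl
  have hdRec : ∀ k, d (k + 1) = (1 - α k) • blockOp (W k) (d k) + α k • (mh - Φ) := by
    intro k
    refine blk_ext _ _ fun i => ?_
    have hBd : blockOp (W k) (d k) i = blockOp (W k) (x k) i - a k := by
      rw [hBi, hBi]
      rw [show ∑ j, W k i j • d k j = ∑ j, (W k i j • x k j - W k i j • a k) from
        Finset.sum_congr rfl fun j _ => by rw [hdi, smul_sub]]
      rw [Finset.sum_sub_distrib, ← Finset.sum_smul, hrow k i, one_smul]
    calc d (k + 1) i = x (k + 1) i - a (k + 1) := rfl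
      _ = ((1 - α k) • blockOp (W k) (x k) i + α k • mh i)
          - ((1 - α k) • a k + α k • φ) := by rw [hx k, haRec k]; rfl
      _ = (1 - α k) • (blockOp (W k) (x k) i - a k) + α k • (mh i - φ) := by module
      _ = (1 - α k) • blockOp (W k) (d k) i + α k • (mh i - Φ i) := by rw [hBd, hΦi]
      _ = ((1 - α k) • blockOp (W k) (d k) + α k • (mh - Φ)) i := rfl
  have hd0 : ∀ k, ∑ i, d k i = (0 : EuclideanSpace ℝ (Fin N)) := by
    intro k
    rw [Finset.sum_congr rfl fun i _ => hdi k i, Finset.sum_sub_distrib,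
      Finset.sum_const, card_univ, Fintype.card_fin]
    rw [show a k = (N:ℝ)⁻¹ • ∑ i, x k i from rfl]
    rw [← Nat.cast_smul_eq_nsmul ℝ N, smul_smul, mul_inv_cancel₀ hNR.ne', one_smul, sub_self]
  set C := ‖mh - Φ‖ with hC
  have hdnorm : ∀ k, ‖d (k + 1)‖ ≤ ρ * ‖d k‖ + α k * C := by
    intro k
    rw [hdRec k]
    have hb := block_contract (W k) ρ hρ0 (hρ k) (d k) (hd0 k)
    calc ‖(1 - α k) • blockOp (W k) (d k) + α k • (mh - Φ)‖
        ≤ ‖(1 - α k) • blockOp (W k) (d k)‖ + ‖α k • (mh - Φ)‖ := norm_add_le _ _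
      _ = (1 - α k) * ‖blockOp (W k) (d k)‖ + α k * C := by
          rw [norm_smul, norm_smul, Real.norm_eq_abs, Real.norm_eq_abs,
            abs_of_pos (by linarith [(hα k).2]), abs_of_pos (hα k).1]
      _ ≤ ρ * ‖d k‖ + α k * C := by
          nlinarith [norm_nonneg (blockOp (W k) (d k)), (hα k).1, (hα k).2,
            norm_nonneg (d k)]
  have hdconv : Tendsto d atTop (nhds 0) := by
    rw [tendsto_zero_iff_norm_tendsto_zero]
    refine tendsto_zero_of_recur hρ0 hρ1 (fun k => norm_nonneg _) hdnorm ?_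
    simpa using hα0.mul_const C
  have hAformula : ∀ k, A k - Φ = (∏ j ∈ Finset.range k, (1 - α j)) • (A 0 - Φ) := by
    intro k
    induction k with
    | zero => simp
    | succ k ih =>
      rw [hARec k, Finset.prod_range_succ,
        show (1 - α k) • A k + α k • Φ - Φ = (1 - α k) • (A k - Φ) from by module,
        ih, smul_smul, mul_comm]
  have hAconv : Tendsto A atTop (nhds Φ) := by
    rw [← tendsto_sub_nhds_zero_iff]
    rw [show (fun k => A k - Φ)
        = fun k => (∏ j ∈ Finset.range k, (1 - α j)) • (A 0 - Φ) from funext hAformula]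
    have h2 := (prod_tendsto_zero α hα hαdiv).smul_const (A 0 - Φ)
    simpa using h2
  have hxe : (fun k => d k + A k) = x := by
    funext k
    simp [hd]
  have hfin := hdconv.add hAconv
  rw [hxe] at hfin
  simpa using hfin
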